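/- Let $(a_p)$ be a positive sequence, $M$ a positive sequence, and suppose that for all $h>0$, $\sup_p a_p M_p/h^p < \infty$. Then there exists a nondecreasing sequence $(r_j)$ of positive reals with $r_j \to \infty$ such that $\sup_p a_p M_p \prod_{j=0}^p r_j < \infty$. -/

import Mathlib

/-- If `sup_p a_p M_p / hᵖ < ∞` for all `h > 0`, there is `r ∈ 𝔑` with
`sup_p a_p M_p ∏_{j=0}^p r_j < ∞`. -/
theorem stmt17 (a : ℕ → ℝ) (ha : ∀ p, 0 < a p) (M : ℕ → ℝ) (hM : ∀ p, 0 < M p)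
    (H : ∀ h : ℝ, 0 < h → ∃ B : ℝ, ∀ p, a p * M p / h ^ p ≤ B) :
    ∃ r : ℕ → ℝ, (∀ j, 0 < r j) ∧ Monotone r ∧
      Filter.Tendsto r Filter.atTop Filter.atTop ∧
      ∃ B : ℝ, ∀ p, a p * M p * ∏ j ∈ Finset.range (p + 1), r j ≤ B := by
  set c : ℕ → ℝ := fun p => a p * M p with hc
  have hcpos : ∀ p, 0 < c p := fun p => mul_pos (ha p) (hM p)
  set u : ℕ → ℝ := fun p => (c p) ^ (((p + 1 : ℕ) : ℝ))⁻¹ with hu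
  have hupos : ∀ p, 0 < u p := fun p => Real.rpow_pos_of_pos (hcpos p) _
  have hupow : ∀ p, (u p) ^ (p + 1) = c p := fun p =>
    Real.rpow_inv_natCast_pow (hcpos p).le (Nat.succ_ne_zero p)
  have key : ∀ ε : ℝ, 0 < ε → ∃ N, ∀ q ≥ N, u q ≤ ε := by
    intro ε hε
    obtain ⟨B, hB⟩ := H (ε / 2) (by linarith)
    have h2 : Filter.Tendsto (fun q : ℕ => ε * 2 ^ q) Filter.atTop Filter.atTop :=
      (tendsto_pow_atTop_atTop_of_one_lt (by norm_num : (1 : ℝ) < 2)).const_mul_atTop hε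
    obtain ⟨N, hN⟩ := Filter.eventually_atTop.mp (h2.eventually_ge_atTop B)
    refine ⟨N, fun q hq => ?_⟩
    have h1 : c q ≤ B * (ε / 2) ^ q := by
      have := hB q
      rwa [div_le_iff₀ (by positivity)] at this
    have h3 : c q ≤ ε ^ (q + 1) := by
      calc c q ≤ B * (ε / 2) ^ q := h1
        _ ≤ (ε * 2 ^ q) * (ε / 2) ^ q :=
            mul_le_mul_of_nonneg_right (hN q hq) (by positivity)
        _ = ε ^ (q + 1) := by
            rw [div_pow, pow_succ]
            field_simp
    have h4 := Real.rpow_le_rpow (hcpos q).le h3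
      (by positivity : (0 : ℝ) ≤ (((q + 1 : ℕ) : ℝ))⁻¹)
    calc u q ≤ (ε ^ (q + 1)) ^ (((q + 1 : ℕ) : ℝ))⁻¹ := h4
      _ = ε := Real.pow_rpow_inv_natCast hε.le (Nat.succ_ne_zero q)
  have hu0 : Filter.Tendsto u Filter.atTop (nhds 0) := by
    rw [Metric.tendsto_atTop]
    intro ε hε
    obtain ⟨N, hN⟩ := key (ε / 2) (by linarith)
    exact ⟨N, fun q hq => by
      rw [Real.dist_eq, sub_zero, abs_of_pos (hupos q)]
      linarith [hN q hq]⟩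
  have hbdd : BddAbove (Set.range u) := hu0.bddAbove_range
  set t : ℕ → ℝ := fun p => ⨆ q : ℕ, u (p + q) with ht
  have hbdd' : ∀ p, BddAbove (Set.range fun q => u (p + q)) := fun p =>
    hbdd.mono (Set.range_subset_iff.mpr fun q => Set.mem_range_self (p + q))
  have hle : ∀ p q, p ≤ q → u q ≤ t p := by
    intro p q hpq
    have hq : u q = u (p + (q - p)) := by rw [Nat.add_sub_cancel' hpq]
    rw [hq]
    exact le_ciSup (hbdd' p) _
  have htpos : ∀ p, 0 < t p := fun p => lt_of_lt_of_le (hupos p) (hle p p le_rfl)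
  have hanti : Antitone t := by
    refine antitone_nat_of_succ_le fun p => ?_
    exact ciSup_le fun q => hle p (p + 1 + q) (by omega)
  have ht0 : Filter.Tendsto t Filter.atTop (nhds 0) := by
    rw [Metric.tendsto_atTop]
    intro ε hε
    obtain ⟨N, hN⟩ := key (ε / 2) (by linarith)
    refine ⟨N, fun p hp => ?_⟩
    rw [Real.dist_eq, sub_zero, abs_of_pos (htpos p)]
    have : t p ≤ ε / 2 := ciSup_le fun q => hN (p + q) (by omega)
    linarith
  refine ⟨fun p => (t p)⁻¹, fun p => inv_pos.mpr (htpos p), ?_, ?_, 1, fun p => ?_⟩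
  · intro i j hij
    exact inv_anti₀ (htpos j) (hanti hij)
  · have htw : Filter.Tendsto t Filter.atTop (nhdsWithin 0 (Set.Ioi 0)) :=
      tendsto_nhdsWithin_of_tendsto_nhds_of_eventually_within _ ht0
        (Filter.Eventually.of_forall fun p => htpos p)
    exact htw.inv_tendsto_nhdsGT_zero
  · have hprod : c p ≤ ∏ j ∈ Finset.range (p + 1), t j := by
      calc c p = ∏ _j ∈ Finset.range (p + 1), u p := by
            rw [Finset.prod_const, Finset.card_range, hupow]
        _ ≤ ∏ j ∈ Finset.range (p + 1), t j :=
            Finset.prod_le_prod (fun j _ => (hupos p).le)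
              (fun j hj => hle j p (Nat.lt_succ_iff.mp (Finset.mem_range.mp hj)))
    have hP : 0 < ∏ j ∈ Finset.range (p + 1), t j :=
      Finset.prod_pos fun j _ => htpos j
    rw [Finset.prod_inv_distrib]
    calc a p * M p * (∏ j ∈ Finset.range (p + 1), t j)⁻¹
        ≤ (∏ j ∈ Finset.range (p + 1), t j) * (∏ j ∈ Finset.range (p + 1), t j)⁻¹ := by
          exact mul_le_mul_of_nonneg_right hprod (inv_nonneg.mpr hP.le)
      _ = 1 := mul_inv_cancel₀ hP.ne'
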